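/- Soundness of the operational semantics of LOOP_D with respect to its denotational semantics (Theorem 8): Let S and T be types. For every LOOP_D command C over S and T (built from skip, primitive pairs ⟨c,γ⟩, sequencing, decidable conditionals, and while loops over well-founded decidable relations subject to the descent restriction) and every state s : S, there exist s' : S, σ : List S and Γ : List (S → T → T) such that the forward big-step judgment ⟨s, C⟩ ⇓ (s', σ, Γ) is derivable and s' = C⁺ s; moreover, for every t : T and every σ₀ : List S, Γ₀ : List (S → T → T), there exists t' : T such that the backward judgment (σ ++ σ₀, Γ ++ Γ₀, t) ⇒ (σ₀, Γ₀, t') is derivable and t' = C⁻ s t. -/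
import Mathlib


open scoped Classical

/-- Commands of the language LOOP_D over state types `S` and `T`: skip,
primitive pairs `⟨c,γ⟩`, sequencing, decidable conditionals, and while loops
over well-founded decidable relations. -/
inductive Cmd (S T : Type*) where
  | skip : Cmd S T
  | prim : (S → S) → (S → T → T) → Cmd S T
  | seq : Cmd S T → Cmd S T → Cmd S T
  | cond : (φ : S → Prop) → DecidablePred φ → Cmd S T → Cmd S T → Cmd S T
  | wh : (r : S → S → Prop) → WellFounded r → (φ : S → Prop) → DecidablePred φ →
      Cmd S T → Cmd S T

/-- The forward denotation `C⁺ : S → S`.  The while case is defined by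
well-founded recursion, recursing as long as both the loop condition holds and
the body makes `r`-descent (under the descent restriction on while formation
this agrees with `s ↦ if φ s then (while)⁺ (C₁⁺ s) else s`). -/
noncomputable def Cmd.fwd {S T : Type*} : Cmd S T → S → S
  | .skip => fun s => s
  | .prim c _ => c
  | .seq C₁ C₂ => fun s => C₂.fwd (C₁.fwd s)
  | .cond φ dec C₁ C₂ => fun s => @ite _ (φ s) (dec s) (C₁.fwd s) (C₂.fwd s)
  | .wh _r hwf φ dec C₁ =>
      hwf.fix (fun s ih =>
        if h : φ s ∧ _r (C₁.fwd s) s then ih (C₁.fwd s) h.2 else s)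

/-- The backward denotation `C⁻ : S → T → T`. -/
noncomputable def Cmd.bwd {S T : Type*} : Cmd S T → S → T → T
  | .skip => fun _ t => t
  | .prim _ γ => γ
  | .seq C₁ C₂ => fun s t => C₁.bwd s (C₂.bwd (C₁.fwd s) t)
  | .cond φ dec C₁ C₂ => fun s t => @ite _ (φ s) (dec s) (C₁.bwd s t) (C₂.bwd s t)
  | .wh _r hwf φ dec C₁ =>
      hwf.fix (fun s ih t =>
        if h : φ s ∧ _r (C₁.fwd s) s then C₁.bwd s (ih (C₁.fwd s) h.2 t) else t)

/-- Well-formed commands: while formation is only allowed when for all `s`,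
`φ s` implies `r (C₁⁺ s) s` (the descent restriction). -/
inductive Cmd.WF {S T : Type*} : Cmd S T → Prop
  | skip : Cmd.WF .skip
  | prim (c : S → S) (γ : S → T → T) : Cmd.WF (.prim c γ)
  | seq {C₁ C₂ : Cmd S T} : C₁.WF → C₂.WF → (Cmd.seq C₁ C₂).WF
  | cond {φ : S → Prop} {dec : DecidablePred φ} {C₁ C₂ : Cmd S T} :
      C₁.WF → C₂.WF → (Cmd.cond φ dec C₁ C₂).WF
  | wh {r : S → S → Prop} {hwf : WellFounded r} {φ : S → Prop}
      {dec : DecidablePred φ} {C₁ : Cmd S T} :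
      C₁.WF → (∀ s, φ s → r (C₁.fwd s) s) → (Cmd.wh r hwf φ dec C₁).WF

/-- The forward big-step judgment `⟨s, C⟩ ⇓ (s', σ, Γ)`, where `σ` and `Γ` are
the stacks of intermediate states and backward commands pushed during the run. -/
inductive Big {S T : Type*} :
    S → Cmd S T → S → List S → List (S → T → T) → Prop
  | skip (s : S) : Big s .skip s [] []
  | prim (s : S) (c : S → S) (γ : S → T → T) : Big s (.prim c γ) (c s) [s] [γ]
  | seq {s s' s'' : S} {C₁ C₂ : Cmd S T} {σ σ' : List S}
      {Γ Γ' : List (S → T → T)} :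
      Big s C₁ s' σ Γ → Big s' C₂ s'' σ' Γ' →
      Big s (.seq C₁ C₂) s'' (σ' ++ σ) (Γ' ++ Γ)
  | cond_true {φ : S → Prop} {dec : DecidablePred φ} {C₁ C₂ : Cmd S T}
      {s s' : S} {σ : List S} {Γ : List (S → T → T)} :
      φ s → Big s C₁ s' σ Γ → Big s (.cond φ dec C₁ C₂) s' σ Γ
  | cond_false {φ : S → Prop} {dec : DecidablePred φ} {C₁ C₂ : Cmd S T}
      {s s' : S} {σ : List S} {Γ : List (S → T → T)} :
      ¬ φ s → Big s C₂ s' σ Γ → Big s (.cond φ dec C₁ C₂) s' σ Γ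
  | wh_true {r : S → S → Prop} {hwf : WellFounded r} {φ : S → Prop}
      {dec : DecidablePred φ} {C₁ : Cmd S T} {s s' s'' : S} {σ σ' : List S}
      {Γ Γ' : List (S → T → T)} :
      φ s → Big s C₁ s' σ Γ → r s' s →
      Big s' (.wh r hwf φ dec C₁) s'' σ' Γ' →
      Big s (.wh r hwf φ dec C₁) s'' (σ' ++ σ) (Γ' ++ Γ)
  | wh_false {r : S → S → Prop} {hwf : WellFounded r} {φ : S → Prop}
      {dec : DecidablePred φ} {C₁ : Cmd S T} {s : S} :
      ¬ φ s → Big s (.wh r hwf φ dec C₁) s [] []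

/-- The backward rewrite relation on triples `(List S, List (S → T → T), T)`,
generated by reflexivity, the pop step, and transitivity. -/
inductive Back {S T : Type*} :
    List S × List (S → T → T) × T → List S × List (S → T → T) × T → Prop
  | refl (x : List S × List (S → T → T) × T) : Back x x
  | pop (s : S) (σ : List S) (γ : S → T → T) (Γ : List (S → T → T)) (t : T) :
      Back (s :: σ, γ :: Γ, t) (σ, Γ, γ s t)
  | trans {x y z : List S × List (S → T → T) × T} :
      Back x y → Back y z → Back x z

/-- Soundness of the operational semantics of LOOP_D with respect to its
denotational semantics (Theorem 8). -/
theorem loopD_operational_sound {S T : Type*} (C : Cmd S T) (hC : C.WF) (s : S) :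
    ∃ (s' : S) (σ : List S) (Γ : List (S → T → T)),
      Big s C s' σ Γ ∧ s' = C.fwd s ∧
      ∀ (t : T) (σ₀ : List S) (Γ₀ : List (S → T → T)),
        ∃ t' : T, Back (σ ++ σ₀, Γ ++ Γ₀, t) (σ₀, Γ₀, t') ∧ t' = C.bwd s t := by

  induction hC generalizing s with
  | skip =>
    exact ⟨s, [], [], .skip s, rfl, fun t σ₀ Γ₀ => ⟨t, .refl _, rfl⟩⟩
  | prim c γ =>
    exact ⟨c s, [s], [γ], .prim s c γ, rfl,
      fun t σ₀ Γ₀ => ⟨γ s t, .pop s σ₀ γ Γ₀ t, rfl⟩⟩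
  | seq h1 h2 ih1 ih2 =>
    obtain ⟨s', σ, Γ, hb1, he1, hbk1⟩ := ih1 s
    obtain ⟨s'', σ', Γ', hb2, he2, hbk2⟩ := ih2 s'
    refine ⟨s'', σ' ++ σ, Γ' ++ Γ, .seq hb1 hb2, by simp [Cmd.fwd, he1, he2], ?_⟩
    intro t σ₀ Γ₀
    obtain ⟨t1, hk1, ht1⟩ := hbk2 t (σ ++ σ₀) (Γ ++ Γ₀)
    obtain ⟨t2, hk2, ht2⟩ := hbk1 t1 σ₀ Γ₀
    refine ⟨t2, ?_, by simp [Cmd.bwd, ht1, ht2, he1]⟩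
    exact Back.trans (by simpa [List.append_assoc] using hk1) hk2
  | @cond φ dec C₁ C₂ h1 h2 ih1 ih2 =>
    by_cases hφ : φ s
    · obtain ⟨s', σ, Γ, hb, he, hbk⟩ := ih1 s
      refine ⟨s', σ, Γ, .cond_true hφ hb, by simp [Cmd.fwd, hφ, he], ?_⟩
      intro t σ₀ Γ₀
      obtain ⟨t', hk, ht⟩ := hbk t σ₀ Γ₀
      exact ⟨t', hk, by simp [Cmd.bwd, hφ, ht]⟩
    · obtain ⟨s', σ, Γ, hb, he, hbk⟩ := ih2 s
      refine ⟨s', σ, Γ, .cond_false hφ hb, by simp [Cmd.fwd, hφ, he], ?_⟩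
      intro t σ₀ Γ₀
      obtain ⟨t', hk, ht⟩ := hbk t σ₀ Γ₀
      exact ⟨t', hk, by simp [Cmd.bwd, hφ, ht]⟩
  | @wh r hwf φ dec C₁ h1 hdes ih1 =>
    induction s using hwf.induction with
    | _ s ihs =>
      have hfix : (Cmd.wh r hwf φ dec C₁).fwd s =
          if h : φ s ∧ r (C₁.fwd s) s then (Cmd.wh r hwf φ dec C₁).fwd (C₁.fwd s) else s := by
        conv_lhs => unfold Cmd.fwd
        rw [hwf.fix_eq]
        rfl
      have hbfix : (Cmd.wh r hwf φ dec C₁).bwd s =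
          fun t => if h : φ s ∧ r (C₁.fwd s) s then
            C₁.bwd s ((Cmd.wh r hwf φ dec C₁).bwd (C₁.fwd s) t) else t := by
        conv_lhs => unfold Cmd.bwd
        rw [hwf.fix_eq]
        by_cases h : φ s ∧ r (C₁.fwd s) s <;> simp [h] <;> rfl
      by_cases hφ : φ s
      · have hr := hdes s hφ
        have hcond : φ s ∧ r (C₁.fwd s) s := ⟨hφ, hr⟩
        obtain ⟨s', σ, Γ, hb1, he1, hbk1⟩ := ih1 s
        obtain ⟨s'', σ', Γ', hb2, he2, hbk2⟩ := ihs (C₁.fwd s) hr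
        refine ⟨s'', σ' ++ σ, Γ' ++ Γ, ?_, ?_, ?_⟩
        · exact .wh_true hφ hb1 (he1 ▸ hr) (he1 ▸ hb2)
        · rw [hfix, dif_pos hcond]; exact he2
        · intro t σ₀ Γ₀
          obtain ⟨t1, hk1, ht1⟩ := hbk2 t (σ ++ σ₀) (Γ ++ Γ₀)
          obtain ⟨t2, hk2, ht2⟩ := hbk1 t1 σ₀ Γ₀
          refine ⟨t2, ?_, ?_⟩
          · exact Back.trans (by simpa [List.append_assoc] using hk1) hk2
          · rw [hbfix]; simp [hcond, ht1, ht2]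
      · refine ⟨s, [], [], .wh_false hφ, ?_, ?_⟩
        · rw [hfix]; simp [hφ]
        · intro t σ₀ Γ₀
          refine ⟨t, .refl _, ?_⟩
          rw [hbfix]; simp [hφ]
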